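/- For n ≥ 5 and any 5-element subset K of V = {0,…,n-1} containing 0, the matrix B^K(n) := ∑_{J ⊆ K, |J| = 4} ε_J A^J(n) is positive semi-definite, where ε_J = 1 if 0 ∈ J and ε_J = -1 otherwise. -/

import Mathlib

open Equiv Matrix Finset

/-- The matrix `A^J(n)` on the alternating group of `Fin n`: entry `2` if `η⁻¹η'` is the
identity or a product of two disjoint 2-cycles with all entries in `J`, `-1` if `η⁻¹η'`
is a 3-cycle with entries in `J`, and `0` otherwise. -/
noncomputable def matAJ (n : ℕ) (J : Finset (Fin n)) :
    Matrix (alternatingGroup (Fin n)) (alternatingGroup (Fin n)) ℝ :=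
  fun η η' =>
    if (η⁻¹ * η' : Perm (Fin n)) = 1 ∨
        ((η⁻¹ * η' : Perm (Fin n)).cycleType = {2, 2} ∧
          (η⁻¹ * η' : Perm (Fin n)).support ⊆ J) then 2
    else if (η⁻¹ * η' : Perm (Fin n)).cycleType = {3} ∧
        (η⁻¹ * η' : Perm (Fin n)).support ⊆ J then -1
    else 0

namespace BKaux

open Equiv.Perm

/-- The function giving the entries of `B^K`. -/
noncomputable def fK {n : ℕ} [NeZero n] (K : Finset (Fin n)) (σ : Perm (Fin n)) : ℝ :=
  if σ = 1 then 6
  else if σ.support.card = 4 ∧ σ.support ⊆ K then (if (0 : Fin n) ∈ σ.support then 2 else -2)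
  else if σ.support.card = 3 ∧ σ.support ⊆ K ∧ (0 : Fin n) ∈ σ.support then -2 else 0

/-- The analogous integer-valued function on `Perm (Fin 5)`. -/
def f5 (σ : Perm (Fin 5)) : ℤ :=
  if σ = 1 then 6
  else if σ.support.card = 4 then (if (0 : Fin 5) ∈ σ.support then 2 else -2)
  else if σ.support.card = 3 ∧ (0 : Fin 5) ∈ σ.support then -2 else 0

lemma ct22_iff {α : Type*} [DecidableEq α] [Fintype α] {σ : Perm α}
    (h : Perm.sign σ = 1) : σ.cycleType = {2, 2} ↔ σ.support.card = 4 := by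
  constructor
  · intro hc
    rw [← sum_cycleType, hc]
    rfl
  · intro hc
    have hsum : σ.cycleType.sum = 4 := by rw [sum_cycleType, hc]
    have h2 : ∀ a ∈ σ.cycleType, 2 ≤ a := fun a ha => two_le_of_mem_cycleType ha
    have hle : Multiset.card σ.cycleType • 2 ≤ σ.cycleType.sum :=
      Multiset.card_nsmul_le_sum h2
    have hcle : Multiset.card σ.cycleType ≤ 2 := by
      rw [smul_eq_mul] at hle; omega
    have hparity : Even (σ.cycleType.sum + Multiset.card σ.cycleType) := by
      rw [sign_of_cycleType] at h
      exact (neg_one_pow_eq_one_iff_even (by decide)).mp h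
    have hcard : Multiset.card σ.cycleType = 2 := by
      rcases (by omega : Multiset.card σ.cycleType = 0 ∨ Multiset.card σ.cycleType = 1 ∨
          Multiset.card σ.cycleType = 2) with hh | hh | hh
      · exfalso
        rw [Multiset.card_eq_zero.mp hh] at hsum
        simp at hsum
      · exfalso
        rw [hsum, hh] at hparity
        exact (by decide : ¬ Even 5) hparity
      · exact hh
    obtain ⟨a, b, hab⟩ := Multiset.card_eq_two.mp hcard
    have ha : 2 ≤ a := h2 a (by rw [hab]; simp)
    have hb : 2 ≤ b := h2 b (by rw [hab]; simp)
    have hs : a + b = 4 := by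
      rw [hab] at hsum
      simpa using hsum
    have : a = 2 ∧ b = 2 := by omega
    rw [hab, this.1, this.2]

lemma ct3_iff {α : Type*} [DecidableEq α] [Fintype α] {σ : Perm α} :
    σ.cycleType = {3} ↔ σ.support.card = 3 :=
  (card_support_eq_three_iff).symm


section SumA

variable {n : ℕ} [NeZero n]

lemma sumA (K : Finset (Fin n)) (hK : K.card = 5) (h0K : (0 : Fin n) ∈ K)
    (σ : Perm (Fin n)) (hσ : Perm.sign σ = 1) :
    ∑ J ∈ K.powersetCard 4, (if (0 : Fin n) ∈ J then (1 : ℝ) else -1) *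
      (if σ = 1 ∨ (σ.cycleType = {2, 2} ∧ σ.support ⊆ J) then 2
       else if σ.cycleType = {3} ∧ σ.support ⊆ J then -1 else 0) = fK K σ := by
  have cardP4 : (K.powersetCard 4).card = 5 := by
    rw [Finset.card_powersetCard, hK]
    rfl
  by_cases h1 : σ = 1
  · subst h1
    have hc1 : ∀ J ∈ K.powersetCard 4,
        (if (0 : Fin n) ∈ J then (1 : ℝ) else -1) *
          (if (1 : Perm (Fin n)) = 1 ∨ ((1 : Perm (Fin n)).cycleType = {2, 2} ∧
              (1 : Perm (Fin n)).support ⊆ J) then 2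
           else if (1 : Perm (Fin n)).cycleType = {3} ∧ (1 : Perm (Fin n)).support ⊆ J
             then -1 else 0)
          = (if (0 : Fin n) ∈ J then (2 : ℝ) else -2) := by
      intro J _
      rw [if_pos (Or.inl rfl)]
      split_ifs <;> ring
    rw [Finset.sum_congr rfl hc1, Finset.sum_ite, Finset.sum_const, Finset.sum_const]
    have hneg : (K.powersetCard 4).filter (fun J => ¬ (0 : Fin n) ∈ J) = {K.erase 0} := by
      ext J
      simp only [Finset.mem_filter, Finset.mem_powersetCard, Finset.mem_singleton]
      constructor
      · rintro ⟨⟨hJK, hJ4⟩, h0J⟩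
        have hsub : J ⊆ K.erase 0 := Finset.subset_erase.mpr ⟨hJK, h0J⟩
        have hcarde : (K.erase 0).card = 4 := by
          rw [Finset.card_erase_of_mem h0K, hK]
        exact Finset.eq_of_subset_of_card_le hsub (by omega)
      · rintro rfl
        exact ⟨⟨Finset.erase_subset _ _, by rw [Finset.card_erase_of_mem h0K, hK]⟩,
          Finset.notMem_erase _ _⟩
    have hnegcard : ((K.powersetCard 4).filter (fun J => ¬ (0 : Fin n) ∈ J)).card = 1 := by
      rw [hneg]; rfl
    have hposcard : ((K.powersetCard 4).filter (fun J => (0 : Fin n) ∈ J)).card = 4 := by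
      have := Finset.card_filter_add_card_filter_not
        (s := K.powersetCard 4) (p := fun J => (0 : Fin n) ∈ J)
      omega
    rw [hposcard, hnegcard]
    simp only [fK, if_true]
    norm_num
  · -- σ ≠ 1
    by_cases h22 : σ.support.card = 4 ∧ σ.support ⊆ K
    · have hct : σ.cycleType = {2, 2} := (ct22_iff hσ).mpr h22.1
      have hmem : σ.support ∈ K.powersetCard 4 :=
        Finset.mem_powersetCard.mpr ⟨h22.2, h22.1⟩
      rw [Finset.sum_eq_single_of_mem _ hmem (fun J hJ hne => ?_)]
      · rw [if_pos (Or.inr ⟨hct, Finset.Subset.refl _⟩)]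
        simp only [fK]
        rw [if_neg h1, if_pos h22]
        split_ifs <;> ring
      · have hJ4 : J.card = 4 := (Finset.mem_powersetCard.mp hJ).2
        have hnsub : ¬ σ.support ⊆ J := by
          intro hsub
          exact hne (Finset.eq_of_subset_of_card_le hsub (by omega)).symm
        have e1 : (if σ = 1 ∨ (σ.cycleType = {2, 2} ∧ σ.support ⊆ J) then (2 : ℝ)
            else if σ.cycleType = {3} ∧ σ.support ⊆ J then -1 else 0) = 0 := by
          rw [if_neg, if_neg]
          · rintro ⟨_, hs⟩
            exact hnsub hs
          · rintro (h | ⟨_, hs⟩)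
            · exact h1 h
            · exact hnsub hs
        rw [e1, mul_zero]
    · by_cases h3 : σ.support.card = 3 ∧ σ.support ⊆ K
      · have hct : σ.cycleType = {3} := ct3_iff.mpr h3.1
        have hct22 : σ.cycleType ≠ {2, 2} := by
          rw [Ne, ct22_iff hσ]
          omega
        have hterm : ∀ J ∈ K.powersetCard 4,
            (if (0 : Fin n) ∈ J then (1 : ℝ) else -1) *
              (if σ = 1 ∨ (σ.cycleType = {2, 2} ∧ σ.support ⊆ J) then 2
               else if σ.cycleType = {3} ∧ σ.support ⊆ J then -1 else 0)
            = (if σ.support ⊆ J then (if (0 : Fin n) ∈ J then (1 : ℝ) else -1) * (-1)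
               else 0) := by
          intro J _
          have e1 : (if σ = 1 ∨ (σ.cycleType = {2, 2} ∧ σ.support ⊆ J) then (2 : ℝ)
              else if σ.cycleType = {3} ∧ σ.support ⊆ J then -1 else 0)
              = (if σ.support ⊆ J then (-1 : ℝ) else 0) := by
            by_cases hs : σ.support ⊆ J
            · rw [if_neg (by rintro (h | ⟨hc, _⟩); exact h1 h; exact hct22 hc),
                if_pos ⟨hct, hs⟩, if_pos hs]
            · rw [if_neg (by rintro (h | ⟨_, hc⟩); exact h1 h; exact hs hc),
                if_neg (by rintro ⟨_, hc⟩; exact hs hc), if_neg hs]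
          rw [e1]
          split_ifs <;> ring
        rw [Finset.sum_congr rfl hterm, ← Finset.sum_filter]
        have himg : (K.powersetCard 4).filter (fun J => σ.support ⊆ J)
            = (K \ σ.support).image (fun x => insert x σ.support) := by
          ext J
          simp only [Finset.mem_filter, Finset.mem_powersetCard, Finset.mem_image,
            Finset.mem_sdiff]
          constructor
          · rintro ⟨⟨hJK, hJ4⟩, hsJ⟩
            have hone : (J \ σ.support).card = 1 := by
              rw [Finset.card_sdiff_of_subset hsJ, hJ4, h3.1]
            obtain ⟨x, hx⟩ := Finset.card_eq_one.mp hone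
            have hxmem : x ∈ J \ σ.support := hx ▸ Finset.mem_singleton_self x
            have hxJ : x ∈ J := (Finset.mem_sdiff.mp hxmem).1
            have hxs : x ∉ σ.support := (Finset.mem_sdiff.mp hxmem).2
            refine ⟨x, ⟨hJK hxJ, hxs⟩, ?_⟩
            have hsub : insert x σ.support ⊆ J := Finset.insert_subset hxJ hsJ
            have hcard : J.card ≤ (insert x σ.support).card := by
              rw [Finset.card_insert_of_notMem hxs, h3.1, hJ4]
            exact Finset.eq_of_subset_of_card_le hsub hcard
          · rintro ⟨x, ⟨hxK, hxs⟩, rfl⟩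
            refine ⟨⟨Finset.insert_subset hxK h3.2, ?_⟩, Finset.subset_insert _ _⟩
            rw [Finset.card_insert_of_notMem hxs, h3.1]
        rw [himg, Finset.sum_image (fun x hx y hy hxy => ?inj)]
        case inj =>
          have hxmem : x ∈ insert y σ.support := hxy ▸ Finset.mem_insert_self x σ.support
          rcases Finset.mem_insert.mp hxmem with h | h
          · exact h
          · exact absurd h (Finset.mem_sdiff.mp hx).2
        by_cases h0 : (0 : Fin n) ∈ σ.support
        · have hterm2 : ∀ x ∈ K \ σ.support,
              (if (0 : Fin n) ∈ insert x σ.support then (1 : ℝ) else -1) * (-1) = -1 := by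
            intro x _
            rw [if_pos (Finset.mem_insert_of_mem h0)]
            ring
          rw [Finset.sum_congr rfl hterm2, Finset.sum_const, Finset.card_sdiff_of_subset h3.2, hK, h3.1]
          simp only [fK]
          rw [if_neg h1, if_neg (by rintro ⟨hc, _⟩; omega), if_pos ⟨h3.1, h3.2, h0⟩]
          norm_num
        · have h0mem : (0 : Fin n) ∈ K \ σ.support := Finset.mem_sdiff.mpr ⟨h0K, h0⟩
          have hc2 : (K \ σ.support).card = 2 := by
            rw [Finset.card_sdiff_of_subset h3.2, hK, h3.1]
          obtain ⟨y, hy⟩ : ∃ y, (K \ σ.support).erase 0 = {y} :=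
            Finset.card_eq_one.mp (by rw [Finset.card_erase_of_mem h0mem, hc2])
          have hymem : y ∈ (K \ σ.support).erase 0 := hy ▸ Finset.mem_singleton_self y
          have hy0 : y ≠ 0 := (Finset.mem_erase.mp hymem).1
          have hyns : y ∉ σ.support :=
            (Finset.mem_sdiff.mp (Finset.mem_of_mem_erase hymem)).2
          have hset : K \ σ.support = insert 0 ({y} : Finset (Fin n)) := by
            rw [← hy, Finset.insert_erase h0mem]
          rw [hset, Finset.sum_insert (by simp [Ne.symm hy0]), Finset.sum_singleton]
          have hnot : (0 : Fin n) ∉ insert y σ.support := by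
            simp only [Finset.mem_insert]
            rintro (h | h)
            · exact hy0 h.symm
            · exact h0 h
          rw [if_pos (Finset.mem_insert_self _ _), if_neg hnot]
          simp only [fK]
          rw [if_neg h1, if_neg (by rintro ⟨hc, _⟩; omega),
            if_neg (by rintro ⟨_, _, hc⟩; exact h0 hc)]
          ring
      · -- all terms vanish
        have hzero : ∀ J ∈ K.powersetCard 4,
            (if (0 : Fin n) ∈ J then (1 : ℝ) else -1) *
              (if σ = 1 ∨ (σ.cycleType = {2, 2} ∧ σ.support ⊆ J) then 2
               else if σ.cycleType = {3} ∧ σ.support ⊆ J then -1 else 0) = 0 := by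
          intro J hJ
          have hJK : J ⊆ K := (Finset.mem_powersetCard.mp hJ).1
          have e1 : (if σ = 1 ∨ (σ.cycleType = {2, 2} ∧ σ.support ⊆ J) then (2 : ℝ)
              else if σ.cycleType = {3} ∧ σ.support ⊆ J then -1 else 0) = 0 := by
            rw [if_neg, if_neg]
            · rintro ⟨hc, hs⟩
              exact h3 ⟨ct3_iff.mp hc, hs.trans hJK⟩
            · rintro (h | ⟨hc, hs⟩)
              · exact h1 h
              · exact h22 ⟨(ct22_iff hσ).mp hc, hs.trans hJK⟩
          rw [e1, mul_zero]
        rw [Finset.sum_eq_zero hzero]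
        simp only [fK]
        rw [if_neg h1, if_neg h22,
          if_neg (by rintro ⟨ha, hb, _⟩; exact h3 ⟨ha, hb⟩)]

end SumA


section Transfer

variable {n : ℕ} [NeZero n] {K : Finset (Fin n)}

lemma fK_ne_zero_subset {σ : Perm (Fin n)} (h : fK K σ ≠ 0) :
    σ.support ⊆ K := by
  by_contra hs
  apply h
  have h1 : σ ≠ 1 := by
    rintro rfl
    exact hs (by simp)
  simp only [fK]
  rw [if_neg h1, if_neg (fun hh => hs hh.2), if_neg (fun hh => hs hh.2.1)]

/-- The order isomorphism `Fin 5 ≃ K`, as an `Equiv` into the subtype. -/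
noncomputable def eqv (hK : K.card = 5) : Fin 5 ≃ {x : Fin n // x ∈ K} :=
  (K.orderIsoOfFin hK).toEquiv

lemma eqv_zero (hK : K.card = 5) (h0K : (0 : Fin n) ∈ K) :
    ((eqv hK 0 : {x : Fin n // x ∈ K}) : Fin n) = 0 := by
  have h5 : (0 : Fin 5) = ⟨0, by norm_num⟩ := rfl
  have : ((eqv hK 0 : {x : Fin n // x ∈ K}) : Fin n) = K.orderEmbOfFin hK 0 :=
    Finset.coe_orderIsoOfFin_apply K hK 0
  rw [this, h5, Finset.orderEmbOfFin_zero hK (by norm_num)]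
  exact le_antisymm (Finset.min'_le K 0 h0K) (by simp [Fin.le_def])

lemma ext_support_subset (hK : K.card = 5) (π : Perm (Fin 5)) :
    (π.extendDomain (eqv hK)).support ⊆ K := by
  rw [Equiv.Perm.support_extend_domain]
  intro x hx
  obtain ⟨a, _, rfl⟩ := Finset.mem_map.mp hx
  exact (eqv hK a).2

lemma ext_zero_mem (hK : K.card = 5) (h0K : (0 : Fin n) ∈ K) (π : Perm (Fin 5)) :
    (0 : Fin n) ∈ (π.extendDomain (eqv hK)).support ↔ (0 : Fin 5) ∈ π.support := by
  rw [Equiv.Perm.support_extend_domain, Finset.mem_map]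
  constructor
  · rintro ⟨a, ha, hae⟩
    have heq : a = 0 := by
      apply (eqv hK).injective
      apply Subtype.ext
      rw [eqv_zero hK h0K]
      exact hae
    rwa [heq] at ha
  · intro h
    exact ⟨0, h, by simpa [Equiv.asEmbedding] using eqv_zero hK h0K⟩

lemma fK_ext (hK : K.card = 5) (h0K : (0 : Fin n) ∈ K) (π : Perm (Fin 5)) :
    fK K (π.extendDomain (eqv hK)) = ((f5 π : ℤ) : ℝ) := by
  have h1 : π.extendDomain (eqv hK) = 1 ↔ π = 1 := Equiv.Perm.extendDomain_eq_one_iff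
  have h2 : (π.extendDomain (eqv hK)).support.card = π.support.card :=
    Equiv.Perm.card_support_extend_domain _
  have h3 := ext_support_subset hK π
  have h4 := ext_zero_mem hK h0K π
  simp only [fK, f5, h1, h2, h3, h4, and_true, true_and]
  split_ifs <;> norm_num

lemma descend (hK : K.card = 5) (τ : Perm (Fin n)) (hs : τ.support ⊆ K) :
    ∃ π : Perm (Fin 5), π.extendDomain (eqv hK) = τ := by
  have hfix : ∀ x, x ∉ K → τ x = x := fun x hx =>
    Equiv.Perm.notMem_support.mp (fun h => hx (hs h))
  have hmapsto : ∀ x : Fin n, x ∈ K ↔ τ x ∈ K := by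
    intro x
    constructor
    · intro hx
      by_contra hτx
      have := hfix _ hτx
      have hx2 : τ x = x := τ.injective this
      rw [hx2] at hτx
      exact hτx hx
    · intro hτx
      by_contra hx
      rw [hfix x hx] at hτx
      exact hx hτx
  refine ⟨(eqv hK).symm.permCongr (τ.subtypePerm (fun x => (hmapsto x).symm)), ?_⟩
  apply Equiv.ext
  intro x
  by_cases hx : x ∈ K
  · rw [Equiv.Perm.extendDomain_apply_subtype _ _ hx]
    simp [Equiv.permCongr_apply, Equiv.Perm.subtypePerm_apply]
  · rw [Equiv.Perm.extendDomain_apply_not_subtype _ _ hx, hfix x hx]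

end Transfer


/-- The list of the 60 even permutations of `Fin 5`. -/
def EL : List (Perm (Fin 5)) := [⟨![0,1,2,3,4], ![0,1,2,3,4], by decide, by decide⟩,
 ⟨![0,1,3,4,2], ![0,1,4,2,3], by decide, by decide⟩,
 ⟨![0,1,4,2,3], ![0,1,3,4,2], by decide, by decide⟩,
 ⟨![0,2,1,4,3], ![0,2,1,4,3], by decide, by decide⟩,
 ⟨![0,2,3,1,4], ![0,3,1,2,4], by decide, by decide⟩,
 ⟨![0,2,4,3,1], ![0,4,1,3,2], by decide, by decide⟩,
 ⟨![0,3,1,2,4], ![0,2,3,1,4], by decide, by decide⟩,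
 ⟨![0,3,2,4,1], ![0,4,2,1,3], by decide, by decide⟩,
 ⟨![0,3,4,1,2], ![0,3,4,1,2], by decide, by decide⟩,
 ⟨![0,4,1,3,2], ![0,2,4,3,1], by decide, by decide⟩,
 ⟨![0,4,2,1,3], ![0,3,2,4,1], by decide, by decide⟩,
 ⟨![0,4,3,2,1], ![0,4,3,2,1], by decide, by decide⟩,
 ⟨![1,0,2,4,3], ![1,0,2,4,3], by decide, by decide⟩,
 ⟨![1,0,3,2,4], ![1,0,3,2,4], by decide, by decide⟩,
 ⟨![1,0,4,3,2], ![1,0,4,3,2], by decide, by decide⟩,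
 ⟨![1,2,0,3,4], ![2,0,1,3,4], by decide, by decide⟩,
 ⟨![1,2,3,4,0], ![4,0,1,2,3], by decide, by decide⟩,
 ⟨![1,2,4,0,3], ![3,0,1,4,2], by decide, by decide⟩,
 ⟨![1,3,0,4,2], ![2,0,4,1,3], by decide, by decide⟩,
 ⟨![1,3,2,0,4], ![3,0,2,1,4], by decide, by decide⟩,
 ⟨![1,3,4,2,0], ![4,0,3,1,2], by decide, by decide⟩,
 ⟨![1,4,0,2,3], ![2,0,3,4,1], by decide, by decide⟩,
 ⟨![1,4,2,3,0], ![4,0,2,3,1], by decide, by decide⟩,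
 ⟨![1,4,3,0,2], ![3,0,4,2,1], by decide, by decide⟩,
 ⟨![2,0,1,3,4], ![1,2,0,3,4], by decide, by decide⟩,
 ⟨![2,0,3,4,1], ![1,4,0,2,3], by decide, by decide⟩,
 ⟨![2,0,4,1,3], ![1,3,0,4,2], by decide, by decide⟩,
 ⟨![2,1,0,4,3], ![2,1,0,4,3], by decide, by decide⟩,
 ⟨![2,1,3,0,4], ![3,1,0,2,4], by decide, by decide⟩,
 ⟨![2,1,4,3,0], ![4,1,0,3,2], by decide, by decide⟩,
 ⟨![2,3,0,1,4], ![2,3,0,1,4], by decide, by decide⟩,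
 ⟨![2,3,1,4,0], ![4,2,0,1,3], by decide, by decide⟩,
 ⟨![2,3,4,0,1], ![3,4,0,1,2], by decide, by decide⟩,
 ⟨![2,4,0,3,1], ![2,4,0,3,1], by decide, by decide⟩,
 ⟨![2,4,1,0,3], ![3,2,0,4,1], by decide, by decide⟩,
 ⟨![2,4,3,1,0], ![4,3,0,2,1], by decide, by decide⟩,
 ⟨![3,0,1,4,2], ![1,2,4,0,3], by decide, by decide⟩,
 ⟨![3,0,2,1,4], ![1,3,2,0,4], by decide, by decide⟩,
 ⟨![3,0,4,2,1], ![1,4,3,0,2], by decide, by decide⟩,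
 ⟨![3,1,0,2,4], ![2,1,3,0,4], by decide, by decide⟩,
 ⟨![3,1,2,4,0], ![4,1,2,0,3], by decide, by decide⟩,
 ⟨![3,1,4,0,2], ![3,1,4,0,2], by decide, by decide⟩,
 ⟨![3,2,0,4,1], ![2,4,1,0,3], by decide, by decide⟩,
 ⟨![3,2,1,0,4], ![3,2,1,0,4], by decide, by decide⟩,
 ⟨![3,2,4,1,0], ![4,3,1,0,2], by decide, by decide⟩,
 ⟨![3,4,0,1,2], ![2,3,4,0,1], by decide, by decide⟩,
 ⟨![3,4,1,2,0], ![4,2,3,0,1], by decide, by decide⟩,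
 ⟨![3,4,2,0,1], ![3,4,2,0,1], by decide, by decide⟩,
 ⟨![4,0,1,2,3], ![1,2,3,4,0], by decide, by decide⟩,
 ⟨![4,0,2,3,1], ![1,4,2,3,0], by decide, by decide⟩,
 ⟨![4,0,3,1,2], ![1,3,4,2,0], by decide, by decide⟩,
 ⟨![4,1,0,3,2], ![2,1,4,3,0], by decide, by decide⟩,
 ⟨![4,1,2,0,3], ![3,1,2,4,0], by decide, by decide⟩,
 ⟨![4,1,3,2,0], ![4,1,3,2,0], by decide, by decide⟩,
 ⟨![4,2,0,1,3], ![2,3,1,4,0], by decide, by decide⟩,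
 ⟨![4,2,1,3,0], ![4,2,1,3,0], by decide, by decide⟩,
 ⟨![4,2,3,0,1], ![3,4,1,2,0], by decide, by decide⟩,
 ⟨![4,3,0,2,1], ![2,4,3,1,0], by decide, by decide⟩,
 ⟨![4,3,1,0,2], ![3,2,4,1,0], by decide, by decide⟩,
 ⟨![4,3,2,1,0], ![4,3,2,1,0], by decide, by decide⟩]

set_option maxRecDepth 100000 in
set_option maxHeartbeats 8000000 in
theorem ELcore : ∀ σ ∈ EL, ((EL.map (fun τ => f5 τ * f5 (τ * σ))).sum = 24 * f5 σ) := by decide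

set_option maxRecDepth 100000 in
set_option maxHeartbeats 8000000 in
theorem ELnodup : EL.Nodup := by decide

set_option maxRecDepth 100000 in
set_option maxHeartbeats 8000000 in
theorem ELsign : ∀ τ ∈ EL, Perm.sign τ = 1 := by decide

lemma EL_toFinset :
    EL.toFinset = Finset.univ.filter (fun τ : Perm (Fin 5) => Perm.sign τ = 1) := by
  have hsub : EL.toFinset ⊆ Finset.univ.filter (fun τ : Perm (Fin 5) => Perm.sign τ = 1) := by
    intro τ hτ
    simp only [List.mem_toFinset] at hτ
    simp [ELsign τ hτ]
  have hlen : EL.toFinset.card = 60 := by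
    rw [List.toFinset_card_of_nodup ELnodup]
    rfl
  have h1 : 2 * Fintype.card (alternatingGroup (Fin 5)) = Fintype.card (Perm (Fin 5)) :=
    two_mul_card_alternatingGroup
  have h2 : Fintype.card (Perm (Fin 5)) = 120 := by
    simp [Fintype.card_perm, Nat.factorial]
  have h3 : Fintype.card (alternatingGroup (Fin 5))
      = (Finset.univ.filter (fun τ : Perm (Fin 5) => Perm.sign τ = 1)).card := by
    classical
    rw [Fintype.card_subtype]
    simp [Equiv.Perm.mem_alternatingGroup]
  apply Finset.eq_of_subset_of_card_le hsub
  rw [hlen, ← h3]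
  omega

lemma EL_complete (τ : Perm (Fin 5)) (h : Perm.sign τ = 1) : τ ∈ EL := by
  rw [← List.mem_toFinset, EL_toFinset]
  simp [h]

lemma sum_alt (g : Perm (Fin 5) → ℝ) :
    ∑ τ : alternatingGroup (Fin 5), g ↑τ = (EL.map g).sum := by
  rw [← List.sum_toFinset g ELnodup, EL_toFinset]
  exact (Finset.sum_subtype _ (fun x => by simp [Equiv.Perm.mem_alternatingGroup]) g).symm

section Conv

variable {n : ℕ} [NeZero n] {K : Finset (Fin n)}

lemma conv (hK : K.card = 5) (h0K : (0 : Fin n) ∈ K)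
    (σ : Perm (Fin n)) (hσ : Perm.sign σ = 1) :
    ∑ τ : alternatingGroup (Fin n), fK K ↑τ * fK K (↑τ * σ) = 24 * fK K σ := by
  by_cases hs : σ.support ⊆ K
  · obtain ⟨π, rfl⟩ := descend hK σ hs
    have hπsign : Perm.sign π = 1 := by
      rwa [Equiv.Perm.sign_extendDomain] at hσ
    set j : alternatingGroup (Fin 5) → alternatingGroup (Fin n) :=
      fun τ => ⟨(↑τ : Perm (Fin 5)).extendDomain (eqv hK), by
        rw [Equiv.Perm.mem_alternatingGroup, Equiv.Perm.sign_extendDomain]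
        exact Equiv.Perm.mem_alternatingGroup.mp τ.2⟩ with hj
    have hinj : Function.Injective j := by
      intro a b hab
      have := congrArg (fun x : alternatingGroup (Fin n) => (x : Perm (Fin n))) hab
      simp only [hj] at this
      exact Subtype.ext (Equiv.Perm.extendDomainHom_injective (eqv hK) this)
    have himg : ∀ τ' : alternatingGroup (Fin n), τ' ∉ Finset.univ.image j →
        fK K (↑τ' : Perm (Fin n)) = 0 := by
      intro τ' hτ'
      by_contra h
      obtain ⟨π', hπ'⟩ := descend hK _ (fK_ne_zero_subset h)
      have hπ'sign : Perm.sign π' = 1 := by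
        have : Perm.sign (↑τ' : Perm (Fin n)) = 1 :=
          Equiv.Perm.mem_alternatingGroup.mp τ'.2
        rwa [← hπ', Equiv.Perm.sign_extendDomain] at this
      apply hτ'
      refine Finset.mem_image.mpr ⟨⟨π', Equiv.Perm.mem_alternatingGroup.mpr hπ'sign⟩,
        Finset.mem_univ _, ?_⟩
      exact Subtype.ext hπ'
    have hstep : ∑ τ : alternatingGroup (Fin n),
          fK K ↑τ * fK K (↑τ * π.extendDomain (eqv hK))
        = ∑ τ' ∈ Finset.univ.image j,
          fK K ↑τ' * fK K (↑τ' * π.extendDomain (eqv hK)) := by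
      apply (Finset.sum_subset (Finset.subset_univ _) ?_).symm
      intro τ' _ hτ'
      rw [himg τ' hτ', zero_mul]
    rw [hstep, Finset.sum_image (fun a _ b _ h => hinj h)]
    have hterm : ∀ τ : alternatingGroup (Fin 5),
        fK K ↑(j τ) * fK K (↑(j τ) * π.extendDomain (eqv hK))
        = ((f5 ↑τ * f5 (↑τ * π) : ℤ) : ℝ) := by
      intro τ
      have h1 : (↑(j τ) : Perm (Fin n)) = (↑τ : Perm (Fin 5)).extendDomain (eqv hK) := rfl
      rw [h1, Equiv.Perm.extendDomain_mul, fK_ext hK h0K, fK_ext hK h0K]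
      push_cast
      ring
    rw [Finset.sum_congr rfl (fun τ _ => hterm τ)]
    have := sum_alt (fun ρ => ((f5 ρ * f5 (ρ * π) : ℤ) : ℝ))
    rw [this]
    have hmap : (EL.map (fun ρ => ((f5 ρ * f5 (ρ * π) : ℤ) : ℝ)))
        = (EL.map (fun ρ => f5 ρ * f5 (ρ * π))).map (⇑(Int.castRingHom ℝ)) := by
      rw [List.map_map]
      simp
    rw [hmap, ← map_list_sum (Int.castRingHom ℝ), ELcore π (EL_complete π hπsign),
      fK_ext hK h0K]
    simp only [Int.coe_castRingHom]
    push_cast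
    ring
  · have h0 : fK K σ = 0 := by
      by_contra h
      exact hs (fK_ne_zero_subset h)
    rw [h0, mul_zero]
    apply Finset.sum_eq_zero
    intro τ _
    by_cases hτ1 : fK K ↑τ = 0
    · rw [hτ1, zero_mul]
    by_cases hτ2 : fK K (↑τ * σ) = 0
    · rw [hτ2, mul_zero]
    exfalso
    apply hs
    have h1 := fK_ne_zero_subset hτ1
    have h2 := fK_ne_zero_subset hτ2
    have hrw : σ = (↑τ : Perm (Fin n))⁻¹ * (↑τ * σ) := by group
    rw [hrw]
    refine (Equiv.Perm.support_mul_le _ _).trans ?_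
    rw [Equiv.Perm.support_inv]
    exact sup_le h1 h2

end Conv

end BKaux

open BKaux in
/-- For `n ≥ 5` and any 5-element subset `K` of `{0,…,n-1}` containing `0`, the matrix
`B^K(n) = ∑_{J ⊆ K, |J|=4} ε_J A^J(n)` is positive semi-definite, where `ε_J = 1`
if `0 ∈ J` and `ε_J = -1` otherwise. -/
theorem matBK_posSemidef (n : ℕ) [NeZero n] (hn : 5 ≤ n)
    (K : Finset (Fin n)) (hK : K.card = 5) (h0K : (0 : Fin n) ∈ K) :
    (∑ J ∈ K.powersetCard 4,
        (if (0 : Fin n) ∈ J then (1 : ℝ) else -1) • matAJ n J).PosSemidef := by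
  set M : Matrix (alternatingGroup (Fin n)) (alternatingGroup (Fin n)) ℝ :=
    fun τ η => (Real.sqrt 24)⁻¹ * fK K (↑τ * ↑η) with hM
  have hsign : ∀ η η' : alternatingGroup (Fin n),
      Perm.sign ((↑η : Perm (Fin n))⁻¹ * (↑η' : Perm (Fin n))) = 1 := by
    intro η η'
    rw [_root_.map_mul, _root_.map_inv, Equiv.Perm.mem_alternatingGroup.mp η.2,
      Equiv.Perm.mem_alternatingGroup.mp η'.2]
    rfl
  have hent : ∀ η η' : alternatingGroup (Fin n),
      (∑ J ∈ K.powersetCard 4, (if (0 : Fin n) ∈ J then (1 : ℝ) else -1) • matAJ n J) η η'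
        = fK K ((↑η : Perm (Fin n))⁻¹ * (↑η' : Perm (Fin n))) := by
    intro η η'
    have := sumA K hK h0K ((↑η : Perm (Fin n))⁻¹ * (↑η' : Perm (Fin n))) (hsign η η')
    rw [← this]
    simp only [Matrix.sum_apply, Matrix.smul_apply, matAJ, smul_eq_mul, InvMemClass.coe_inv]
  have hfact : (∑ J ∈ K.powersetCard 4,
      (if (0 : Fin n) ∈ J then (1 : ℝ) else -1) • matAJ n J) = Mᴴ * M := by
    ext η η'
    rw [hent η η', Matrix.mul_apply]
    simp only [Matrix.conjTranspose_apply, star_trivial]; simp only [hM]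
    have c2 : (Real.sqrt 24)⁻¹ * (Real.sqrt 24)⁻¹ = (24 : ℝ)⁻¹ := by
      rw [← mul_inv, Real.mul_self_sqrt (by norm_num : (0:ℝ) ≤ 24)]
    have hterm : ∀ τ : alternatingGroup (Fin n),
        ((Real.sqrt 24)⁻¹ * fK K (↑τ * ↑η)) * ((Real.sqrt 24)⁻¹ * fK K (↑τ * ↑η'))
          = (24 : ℝ)⁻¹ * (fK K (↑τ * ↑η) * fK K (↑τ * ↑η')) := by
      intro τ
      rw [show ((Real.sqrt 24)⁻¹ * fK K (↑τ * ↑η)) * ((Real.sqrt 24)⁻¹ * fK K (↑τ * ↑η'))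
          = ((Real.sqrt 24)⁻¹ * (Real.sqrt 24)⁻¹) * (fK K (↑τ * ↑η) * fK K (↑τ * ↑η'))
        from by ring, c2]
    rw [Finset.sum_congr rfl (fun τ _ => hterm τ), ← Finset.mul_sum]
    have hre : ∑ τ : alternatingGroup (Fin n), fK K (↑τ * ↑η) * fK K (↑τ * ↑η')
        = ∑ ρ : alternatingGroup (Fin n),
            fK K ↑ρ * fK K (↑ρ * ((↑η : Perm (Fin n))⁻¹ * (↑η' : Perm (Fin n)))) := by
      apply Fintype.sum_equiv (Equiv.mulRight η)
      intro τ
      have hcoe : ((↑(τ * η) : Perm (Fin n))) = ↑τ * ↑η := rfl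
      have hgrp : (↑τ : Perm (Fin n)) * ↑η * ((↑η)⁻¹ * ↑η') = ↑τ * ↑η' := by group
      simp only [Equiv.coe_mulRight, hcoe, hgrp]
    rw [hre, conv hK h0K _ (hsign η η')]
    ring
  rw [hfact]
  exact Matrix.posSemidef_conjTranspose_mul_self M
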